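/- Let f = h + ḡ be a sense-preserving harmonic mapping on 𝔻 with h ∈ S^δ[α] (δ ≥ 0, 0 ≤ α < 1), g(z) = Σ_{n≥1} bₙ zⁿ, g' = w·h' where |w| < 1 on 𝔻, and |b₁| = β ∈ [0,1). Then |b₂| ≤ (1-α)β/(2^δ(2-α)) + (1-β²)/2. -/

import Mathlib

open Complex Metric

lemma myHasFPSB (c : ℕ → ℂ) (f : ℂ → ℂ)
    (hf : ∀ z ∈ ball (0 : ℂ) 1, HasSum (fun n : ℕ => c n * z ^ n) (f z)) :
    HasFPowerSeriesOnBall f (FormalMultilinearSeries.ofScalars ℂ c) 0 1 := by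
  constructor
  · refine ENNReal.le_of_forall_nnreal_lt fun r hr => ?_
    have hr1 : (r : ℝ) < 1 := by exact_mod_cast hr
    have hmem : ((r : ℝ) : ℂ) ∈ ball (0 : ℂ) 1 := by
      rw [mem_ball_zero_iff, Complex.norm_real, Real.norm_eq_abs,
        _root_.abs_of_nonneg r.coe_nonneg]
      exact hr1
    have hsum := (hf _ hmem).summable
    apply FormalMultilinearSeries.le_radius_of_tendsto
    have h0 : Filter.Tendsto (fun n => ‖c n * ((r : ℝ) : ℂ) ^ n‖) Filter.atTop (nhds 0) :=
      tendsto_zero_iff_norm_tendsto_zero.mp hsum.tendsto_atTop_zero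
    convert h0 using 2 with n
    rw [FormalMultilinearSeries.ofScalars_norm, norm_mul, norm_pow, Complex.norm_real,
      Real.norm_eq_abs, _root_.abs_of_nonneg r.coe_nonneg]
  · exact one_pos
  · intro y hy
    rw [mem_emetric_ball_zero_iff] at hy
    have hy' : y ∈ ball (0 : ℂ) 1 := by
      rw [mem_ball_zero_iff]; rw [← ofReal_norm, ENNReal.ofReal_lt_one] at hy; exact hy
    have h1 := hf y hy'
    simp only [zero_add]
    convert h1 using 1 with n
    · rfl
    funext n
    rw [FormalMultilinearSeries.ofScalars_apply_eq, smul_eq_mul]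

lemma myMobius (x y : ℂ) (hx : ‖x‖ < 1) (hy : ‖y‖ < 1) :
    ‖x - y‖ < ‖1 - (starRingEnd ℂ) x * y‖ := by
  have hx2 : normSq x < 1 := by
    rw [← Complex.sq_norm]; nlinarith [norm_nonneg x, hx]
  have hy2 : normSq y < 1 := by
    rw [← Complex.sq_norm]; nlinarith [norm_nonneg y, hy]
  have key : normSq (1 - (starRingEnd ℂ) x * y) - normSq (x - y)
      = (1 - normSq x) * (1 - normSq y) := by
    simp only [Complex.normSq_apply, Complex.sub_re, Complex.sub_im, Complex.mul_re,
      Complex.mul_im, Complex.conj_re, Complex.conj_im, Complex.one_re, Complex.one_im]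
    ring
  have h2 : normSq (x - y) < normSq (1 - (starRingEnd ℂ) x * y) := by nlinarith
  refine lt_of_pow_lt_pow_left₀ 2 (norm_nonneg _) ?_
  rw [Complex.sq_norm, Complex.sq_norm]
  exact h2

lemma mySchwarzPick (w : ℂ → ℂ) (hw : DifferentiableOn ℂ w (ball (0 : ℂ) 1))
    (hwlt : ∀ z ∈ ball (0 : ℂ) 1, ‖w z‖ < 1) :
    ‖deriv w 0‖ ≤ 1 - ‖w 0‖ ^ 2 := by
  set c := w 0 with hc'
  have h01 : (0 : ℂ) ∈ ball (0 : ℂ) 1 := by simp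
  have hc : ‖c‖ < 1 := hwlt 0 h01
  have hden : ∀ z ∈ ball (0 : ℂ) 1, 1 - (starRingEnd ℂ) c * w z ≠ 0 := by
    intro z hz h0
    have h1 : (1 : ℂ) = (starRingEnd ℂ) c * w z := by linear_combination h0
    have h2 : (1:ℝ) = ‖c‖ * ‖w z‖ := by
      calc (1:ℝ) = ‖(1:ℂ)‖ := by simp
        _ = ‖(starRingEnd ℂ) c * w z‖ := by rw [← h1]
        _ = ‖c‖ * ‖w z‖ := by rw [norm_mul, RCLike.norm_conj]
    nlinarith [norm_nonneg (w z), hwlt z hz, norm_nonneg c]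
  set φ : ℂ → ℂ := fun z => (w z - c) / (1 - (starRingEnd ℂ) c * w z) with hφdef
  have hφ0 : φ 0 = 0 := by simp [hφdef, hc']
  have hφd : DifferentiableOn ℂ φ (ball (0:ℂ) 1) := by
    apply DifferentiableOn.div
    · exact hw.sub_const c
    · exact (differentiableOn_const 1).sub (hw.const_mul _)
    · exact hden
  have hmaps : Set.MapsTo φ (ball (0:ℂ) 1) (ball (φ 0) 1) := by
    rw [hφ0]
    intro z hz
    rw [mem_ball_zero_iff]
    have hkey := myMobius c (w z) hc (hwlt z hz)
    have hdpos : 0 < ‖1 - (starRingEnd ℂ) c * w z‖ :=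
      norm_pos_iff.mpr (hden z hz)
    rw [hφdef]
    simp only [norm_div]
    rw [div_lt_one hdpos, norm_sub_rev]
    exact hkey
  have hsch : ‖deriv φ 0‖ ≤ 1 :=
    le_trans (Complex.norm_deriv_le_div_of_mapsTo_ball hφd (hmaps.mono_right ball_subset_closedBall) one_pos) (by norm_num)
  -- compute deriv φ 0
  have hwd : DifferentiableAt ℂ w 0 :=
    (hw.differentiableAt (isOpen_ball.mem_nhds h01))
  have hu : HasDerivAt (fun z => w z - c) (deriv w 0) 0 := hwd.hasDerivAt.sub_const c
  have hv : HasDerivAt (fun z => 1 - (starRingEnd ℂ) c * w z)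
      (-((starRingEnd ℂ) c * deriv w 0)) 0 := by
    simpa using (hwd.hasDerivAt.const_mul ((starRingEnd ℂ) c)).const_sub 1
  have hv0 : 1 - (starRingEnd ℂ) c * w 0 ≠ 0 := hden 0 h01
  have hφder : HasDerivAt φ _ 0 := hu.div hv hv0
  have hdφ : deriv φ 0 = deriv w 0 / (1 - (starRingEnd ℂ) c * c) := by
    rw [hφder.deriv]
    rw [← hc'] at hv0 ⊢
    field_simp
    ring
  have hnorm : ‖(1 : ℂ) - (starRingEnd ℂ) c * c‖ = 1 - ‖c‖ ^ 2 := by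
    have : (starRingEnd ℂ) c * c = (normSq c : ℂ) := by
      rw [mul_comm, Complex.mul_conj]
    rw [this, ← Complex.ofReal_one, ← Complex.ofReal_sub, Complex.norm_real, Real.norm_eq_abs,
      _root_.abs_of_nonneg, Complex.normSq_eq_norm_sq]
    have := Complex.normSq_eq_norm_sq c
    nlinarith [norm_nonneg c, hc]
  have : ‖deriv w 0‖ = ‖deriv φ 0‖ * (1 - ‖c‖ ^ 2) := by
    rw [hdφ, norm_div, hnorm, div_mul_cancel₀]
    exact (by nlinarith [norm_nonneg c] : (0:ℝ) < 1 - ‖c‖ ^ 2).ne'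
  rw [this]
  exact mul_le_of_le_one_left (by nlinarith [norm_nonneg c]) hsch

theorem b2_bound
    (α β δ : ℝ) (hα0 : 0 ≤ α) (hα1 : α < 1) (hβ0 : 0 ≤ β) (hβ1 : β < 1)
    (hδ : 0 ≤ δ)
    (h g w : ℂ → ℂ) (a b : ℕ → ℂ)
    (ha0 : a 0 = 0) (ha1 : a 1 = 1) (hb0 : b 0 = 0)
    (hreph : ∀ z ∈ ball (0 : ℂ) 1, HasSum (fun n : ℕ => a n * z ^ n) (h z))
    (hrepg : ∀ z ∈ ball (0 : ℂ) 1, HasSum (fun n : ℕ => b n * z ^ n) (g z))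
    (hsb : Summable fun n : ℕ =>
      ((n : ℝ) + 2) ^ δ * (((n : ℝ) + 2 - α) / (1 - α)) * ‖a (n + 2)‖)
    (hcoef : ∑' n : ℕ,
      ((n : ℝ) + 2) ^ δ * (((n : ℝ) + 2 - α) / (1 - α)) * ‖a (n + 2)‖ ≤ 1)
    (hw : DifferentiableOn ℂ w (ball (0 : ℂ) 1))
    (hwlt : ∀ z ∈ ball (0 : ℂ) 1, ‖w z‖ < 1)
    (hdil : ∀ z ∈ ball (0 : ℂ) 1, deriv g z = w z * deriv h z)
    (hβ : ‖b 1‖ = β) :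
    ‖b 2‖ ≤ (1 - α) * β / ((2 : ℝ) ^ δ * (2 - α)) + (1 - β ^ 2) / 2 := by
  have h01 : (0 : ℂ) ∈ ball (0 : ℂ) 1 := by simp
  have hnhds : ball (0 : ℂ) 1 ∈ nhds (0 : ℂ) := isOpen_ball.mem_nhds h01
  have hPh := myHasFPSB a h hreph
  have hPg := myHasFPSB b g hrepg
  have hcoeff : ∀ (c : ℕ → ℂ) (n : ℕ),
      ((FormalMultilinearSeries.ofScalars ℂ c n) fun _ => (1:ℂ)) = c n := by
    intro c n
    rw [FormalMultilinearSeries.ofScalars_apply_eq]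
    simp
  -- first derivatives
  have hdh0 : deriv h 0 = 1 := by
    rw [hPh.hasFPowerSeriesAt.deriv]
    exact (hcoeff a 1).trans ha1
  have hdg0 : deriv g 0 = b 1 := by
    rw [hPg.hasFPowerSeriesAt.deriv]
    exact hcoeff b 1
  -- second derivatives
  have hsecond : ∀ (c : ℕ → ℂ) (f : ℂ → ℂ),
      HasFPowerSeriesOnBall f (FormalMultilinearSeries.ofScalars ℂ c) 0 1 →
      deriv (deriv f) 0 = 2 * c 2 := by
    intro c f hP
    have := hP.factorial_smul (1 : ℂ) 2
    rw [FormalMultilinearSeries.ofScalars_apply_eq] at this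
    have h2 : iteratedFDeriv ℂ 2 f 0 (fun _ => (1:ℂ)) = iteratedDeriv 2 f 0 := by
      rw [iteratedDeriv_eq_iteratedFDeriv]
    rw [h2] at this
    rw [iteratedDeriv_succ, iteratedDeriv_one] at this
    simpa [Nat.factorial, smul_eq_mul, two_mul] using this.symm
  have h2h : deriv (deriv h) 0 = 2 * a 2 := hsecond a h hPh
  have h2g : deriv (deriv g) 0 = 2 * b 2 := hsecond b g hPg
  -- w 0 = b 1
  have hw0 : w 0 = b 1 := by
    have := hdil 0 h01
    rw [hdg0, hdh0, mul_one] at this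
    exact this.symm
  -- differentiability of deriv h at 0
  have hdhd : DifferentiableAt ℂ (deriv h) 0 := by
    have han := hPh.analyticOnNhd
    exact (han.deriv 0 (EMetric.mem_ball_self (by norm_num))).differentiableAt
  have hwd : DifferentiableAt ℂ w 0 := hw.differentiableAt hnhds
  -- derivative of the dilatation identity
  have heq : deriv g =ᶠ[nhds (0:ℂ)] fun z => w z * deriv h z :=
    Filter.eventuallyEq_of_mem hnhds hdil
  have hkey : deriv (deriv g) 0 = deriv w 0 * deriv h 0 + w 0 * deriv (deriv h) 0 := by
    rw [heq.deriv_eq]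
    exact deriv_mul hwd hdhd
  -- algebraic relation
  have hb2 : b 2 = deriv w 0 / 2 + b 1 * a 2 := by
    rw [hkey, hdh0, h2h, hw0] at h2g
    field_simp at h2g ⊢
    linear_combination -h2g
  -- bound on a 2
  have hα' : 0 < 1 - α := by linarith
  have h2α : 0 < 2 - α := by linarith
  have h2δ : (0:ℝ) < 2 ^ δ := Real.rpow_pos_of_pos two_pos δ
  have ha2b : (2:ℝ) ^ δ * ((2 - α) / (1 - α)) * ‖a 2‖ ≤ 1 := by
    have := Summable.le_tsum hsb 0 (fun j _ => by
      have hj : (0:ℝ) ≤ (j:ℝ) := Nat.cast_nonneg j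
      have h1 : (0:ℝ) ≤ ((j:ℝ)+2)^δ := Real.rpow_nonneg (by linarith) δ
      have h2 : (0:ℝ) ≤ ((j:ℝ)+2-α)/(1-α) := div_nonneg (by linarith) (by linarith)
      exact mul_nonneg (mul_nonneg h1 h2) (norm_nonneg _))
    simp only [Nat.cast_zero, zero_add] at this
    exact le_trans this hcoef
  have ha2 : ‖a 2‖ ≤ (1 - α) / (2 ^ δ * (2 - α)) := by
    rw [le_div_iff₀ (by positivity)]
    have h3 := mul_le_mul_of_nonneg_right ha2b hα'.le
    have e : 2 ^ δ * ((2 - α) / (1 - α)) * ‖a 2‖ * (1 - α) = ‖a 2‖ * (2 ^ δ * (2 - α)) := by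
      field_simp
    rw [e, one_mul] at h3
    exact h3
  -- Schwarz-Pick
  have hsp : ‖deriv w 0‖ ≤ 1 - β ^ 2 := by
    have := mySchwarzPick w hw hwlt
    rwa [hw0, hβ] at this
  -- conclude
  rw [hb2]
  calc ‖deriv w 0 / 2 + b 1 * a 2‖ ≤ ‖deriv w 0 / 2‖ + ‖b 1 * a 2‖ := norm_add_le _ _
    _ = ‖deriv w 0‖ / 2 + β * ‖a 2‖ := by
        rw [norm_div, norm_mul, hβ]; norm_num
    _ ≤ (1 - β ^ 2) / 2 + β * ((1 - α) / (2 ^ δ * (2 - α))) := by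
        gcongr
    _ = (1 - α) * β / ((2:ℝ) ^ δ * (2 - α)) + (1 - β ^ 2) / 2 := by
        ring
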